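/- There exist constants c₁, c₂ > 0 such that for every n ≥ 2, the linear map p : Z_2^n → ℓ_2^n defined by p(a,b) = a satisfies c₁·log n ≤ sup{ ‖a‖₂ / ‖(a,b)‖_{Z_2^n} : (a,b) ≠ 0 } ≤ c₂·log n. -/

import Mathlib

open scoped BigOperators

/-- The Euclidean norm on `ℝⁿ`. -/
noncomputable def l2 {n : ℕ} (b : Fin n → ℝ) : ℝ := Real.sqrt (∑ j, b j ^ 2)

/-- The Kalton–Peck map `F(b)_j = b_j log(|b_j|/‖b‖₂)`, with `F(b)_j = 0` when `b_j = 0`. -/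
noncomputable def KPF {n : ℕ} (b : Fin n → ℝ) : Fin n → ℝ :=
  fun j => if b j = 0 then 0 else b j * Real.log (|b j| / l2 b)

/-- The Kalton–Peck quasi-norm `‖(a,b)‖ = ‖b‖₂ + ‖a - F(b)‖₂` on `ℝⁿ × ℝⁿ`. -/
noncomputable def znorm {n : ℕ} (x : (Fin n → ℝ) × (Fin n → ℝ)) : ℝ :=
  l2 x.2 + l2 (x.1 - KPF x.2)

/-- Operator "norm" `sup_{x ≠ 0} N_W(T x) / N_V(x)` of a map `T` between spaces
equipped with (quasi-)norms `N_V`, `N_W`. -/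
noncomputable def ratioSup {V W : Type*} [Zero V] (NV : V → ℝ) (NW : W → ℝ) (T : V → W) : ℝ :=
  ⨆ x : {x : V // x ≠ 0}, NW (T x.1) / NV x.1

noncomputable def toE {n : ℕ} (b : Fin n → ℝ) : EuclideanSpace ℝ (Fin n) :=
  (EuclideanSpace.equiv (Fin n) ℝ).symm b

lemma l2_eq_norm {n : ℕ} (b : Fin n → ℝ) : l2 b = ‖toE b‖ := by
  rw [EuclideanSpace.norm_eq (toE b)]
  unfold l2
  congr 1
  refine Finset.sum_congr rfl fun j _ => ?_
  simp [toE, Real.norm_eq_abs, sq_abs]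

lemma l2_nonneg {n : ℕ} (b : Fin n → ℝ) : 0 ≤ l2 b := Real.sqrt_nonneg _

lemma l2_eq_zero {n : ℕ} {b : Fin n → ℝ} (h : l2 b = 0) : b = 0 := by
  rw [l2_eq_norm, norm_eq_zero] at h
  have := congrArg (EuclideanSpace.equiv (Fin n) ℝ) h
  simpa [toE] using this

lemma l2_pos {n : ℕ} {b : Fin n → ℝ} (h : b ≠ 0) : 0 < l2 b := by
  rcases lt_or_eq_of_le (l2_nonneg b) with h' | h'
  · exact h'
  · exact absurd (l2_eq_zero h'.symm) h

lemma l2_triangle_sub {n : ℕ} (a c : Fin n → ℝ) : l2 a ≤ l2 (a - c) + l2 c := by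
  rw [l2_eq_norm, l2_eq_norm, l2_eq_norm]
  have : toE a = toE (a - c) + toE c := by
    simp only [toE, map_sub]; abel
  rw [this]; exact norm_add_le _ _

lemma sq_sum_l2 {n : ℕ} (b : Fin n → ℝ) : (l2 b) ^ 2 = ∑ j, b j ^ 2 := by
  unfold l2
  exact Real.sq_sqrt (Finset.sum_nonneg fun j _ => sq_nonneg _)

lemma abs_le_l2 {n : ℕ} (b : Fin n → ℝ) (j : Fin n) : |b j| ≤ l2 b := by
  have h1 : b j ^ 2 ≤ (l2 b) ^ 2 := by
    rw [sq_sum_l2]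
    exact Finset.single_le_sum (fun i _ => sq_nonneg (b i)) (Finset.mem_univ j)
  have := Real.sqrt_le_sqrt h1
  rwa [Real.sqrt_sq_eq_abs, Real.sqrt_sq (l2_nonneg b)] at this

lemma KPF_sq_le {n : ℕ} (hn : 2 ≤ n) (b : Fin n → ℝ) (j : Fin n) :
    (KPF b j) ^ 2 ≤ 2 * (b j) ^ 2 * (Real.log n) ^ 2 + 2 * (l2 b) ^ 2 / n ^ 2 := by
  have hn0 : (0:ℝ) < n := by positivity
  have hlogn : 0 ≤ Real.log n := Real.log_nonneg (by exact_mod_cast Nat.one_le_of_lt hn)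
  by_cases hb : b j = 0
  · have h0 : KPF b j = 0 := by simp [KPF, hb]
    rw [h0, show (0:ℝ)^2 = 0 by norm_num]
    positivity
  · have habs : 0 < |b j| := abs_pos.mpr hb
    have hbne : b ≠ 0 := fun h => hb (by simp [h])
    have hL : 0 < l2 b := l2_pos hbne
    have hle : |b j| ≤ l2 b := abs_le_l2 b j
    have ht : |b j| / l2 b ≤ 1 := div_le_one_of_le₀ hle hL.le
    have htpos : 0 < |b j| / l2 b := div_pos habs hL
    -- log (l2 b / |b j|) ≤ log n + l2 b / (n * |b j|)
    have key : Real.log (l2 b / |b j|) ≤ Real.log n + l2 b / (n * |b j|) := by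
      have h1 : Real.log (l2 b / |b j|) =
          Real.log n + Real.log (l2 b / (n * |b j|)) := by
        rw [← Real.log_mul (ne_of_gt hn0) (by positivity)]
        congr 1
        field_simp
      have h2 : Real.log (l2 b / (n * |b j|)) ≤ l2 b / (n * |b j|) := by
        have := Real.log_le_sub_one_of_pos (x := l2 b / (n * |b j|)) (by positivity)
        linarith
      linarith
    have hlogt : Real.log (|b j| / l2 b) = - Real.log (l2 b / |b j|) := by
      rw [← Real.log_inv]
      congr 1
      field_simp
    have hKPF : KPF b j = b j * Real.log (|b j| / l2 b) := by simp [KPF, hb]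
    have hlognn : 0 ≤ Real.log (l2 b / |b j|) := by
      apply Real.log_nonneg
      rw [le_div_iff₀ habs]
      simpa using hle
    have habs2 : |KPF b j| ≤ |b j| * Real.log n + l2 b / n := by
      rw [hKPF, abs_mul, hlogt, abs_neg, abs_of_nonneg hlognn]
      have := mul_le_mul_of_nonneg_left key habs.le
      calc |b j| * Real.log (l2 b / |b j|)
          ≤ |b j| * (Real.log n + l2 b / (n * |b j|)) := this
        _ = |b j| * Real.log n + l2 b / n := by field_simp
    have h3 : (KPF b j) ^ 2 ≤ (|b j| * Real.log n + l2 b / n) ^ 2 := by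
      rw [← sq_abs]
      apply pow_le_pow_left₀ (abs_nonneg _) habs2
    have h4 : (|b j| * Real.log n + l2 b / n) ^ 2
        ≤ 2 * (|b j| * Real.log n) ^ 2 + 2 * (l2 b / n) ^ 2 := by
      nlinarith [sq_nonneg (|b j| * Real.log n - l2 b / n)]
    have h5 : (|b j| * Real.log n) ^ 2 = (b j) ^ 2 * (Real.log n) ^ 2 := by
      rw [mul_pow, sq_abs]
    have h6 : 2 * (l2 b / n) ^ 2 = 2 * (l2 b) ^ 2 / n ^ 2 := by
      field_simp
    nlinarith

lemma l2_KPF_le {n : ℕ} (hn : 2 ≤ n) (b : Fin n → ℝ) :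
    l2 (KPF b) ≤ 3 * Real.log n * l2 b := by
  have hn0 : (0:ℝ) < n := by positivity
  have hn2 : (2:ℝ) ≤ n := by exact_mod_cast hn
  have hlog2 : Real.log 2 ≤ Real.log n := Real.log_le_log (by norm_num) hn2
  have hlog2' : (0.6931471803:ℝ) < Real.log 2 := Real.log_two_gt_d9
  have hlogn : 0 < Real.log n := by linarith
  have hL : 0 ≤ l2 b := l2_nonneg b
  have hsum : ∑ j, (KPF b j) ^ 2 ≤ (3 * Real.log n * l2 b) ^ 2 := by
    have h1 : ∑ j, (KPF b j) ^ 2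
        ≤ ∑ j : Fin n, (2 * (b j) ^ 2 * (Real.log n) ^ 2 + 2 * (l2 b) ^ 2 / n ^ 2) :=
      Finset.sum_le_sum fun j _ => KPF_sq_le hn b j
    have h2 : ∑ j : Fin n, (2 * (b j) ^ 2 * (Real.log n) ^ 2 + 2 * (l2 b) ^ 2 / n ^ 2)
        = 2 * (Real.log n) ^ 2 * (l2 b) ^ 2 + n * (2 * (l2 b) ^ 2 / n ^ 2) := by
      rw [Finset.sum_add_distrib, Finset.sum_const, ← Finset.sum_mul, ← Finset.mul_sum,
        ← sq_sum_l2]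
      simp [Finset.card_univ, nsmul_eq_mul]
      ring
    have h3 : (n:ℝ) * (2 * (l2 b) ^ 2 / n ^ 2) = 2 * (l2 b) ^ 2 / n := by
      field_simp
    have h4 : 2 * (l2 b) ^ 2 / n ≤ (l2 b) ^ 2 := by
      rw [div_le_iff₀ hn0]
      nlinarith [sq_nonneg (l2 b)]
    have hsq : (0.48:ℝ) ≤ (Real.log n) ^ 2 := by nlinarith
    have h5 : (l2 b) ^ 2 ≤ 7 * (Real.log n) ^ 2 * (l2 b) ^ 2 := by
      nlinarith [sq_nonneg (l2 b), hsq]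
    have h6 : (3 * Real.log n * l2 b) ^ 2 = 9 * (Real.log n) ^ 2 * (l2 b) ^ 2 := by ring
    linarith [h1, h2 ▸ h1]
  have := Real.sqrt_le_sqrt hsum
  rwa [Real.sqrt_sq (by positivity)] at this

lemma znorm_pos {n : ℕ} {x : (Fin n → ℝ) × (Fin n → ℝ)} (hx : x ≠ 0) : 0 < znorm x := by
  rcases lt_or_eq_of_le (add_nonneg (l2_nonneg x.2) (l2_nonneg (x.1 - KPF x.2)) : (0:ℝ) ≤ znorm x) with h | h
  · exact h
  · exfalso
    have h1 : l2 x.2 = 0 := by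
      have := l2_nonneg x.2; have := l2_nonneg (x.1 - KPF x.2)
      linarith
    have h2 : l2 (x.1 - KPF x.2) = 0 := by
      have := l2_nonneg x.2; have := l2_nonneg (x.1 - KPF x.2)
      linarith
    have hb : x.2 = 0 := l2_eq_zero h1
    have hF : KPF x.2 = 0 := by
      funext j; simp [KPF, hb]
    have ha : x.1 = 0 := by
      have := l2_eq_zero h2
      rw [hF, sub_zero] at this
      exact this
    exact hx (Prod.ext ha hb)

lemma ratio_le {n : ℕ} (hn : 2 ≤ n) (x : (Fin n → ℝ) × (Fin n → ℝ)) (hx : x ≠ 0) :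
    l2 x.1 / znorm x ≤ 3 * Real.log n := by
  have hz : 0 < znorm x := znorm_pos hx
  rw [div_le_iff₀ hz]
  have hlog2' : (0.6931471803:ℝ) < Real.log 2 := Real.log_two_gt_d9
  have hlog2 : Real.log 2 ≤ Real.log n :=
    Real.log_le_log (by norm_num) (by exact_mod_cast hn)
  have h1 : l2 x.1 ≤ l2 (x.1 - KPF x.2) + l2 (KPF x.2) := l2_triangle_sub _ _
  have h2 : l2 (KPF x.2) ≤ 3 * Real.log n * l2 x.2 := l2_KPF_le hn x.2
  have h3 : l2 (x.1 - KPF x.2) ≤ 3 * Real.log n * l2 (x.1 - KPF x.2) := by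
    nlinarith [l2_nonneg (x.1 - KPF x.2)]
  unfold znorm
  nlinarith [l2_nonneg x.2, l2_nonneg (x.1 - KPF x.2)]

/-- The operator norm of the projection `p : Z_2^n → ℓ_2^n`, `p(a,b) = a`, is of order `log n`. -/
theorem znorm_first_projection_opnorm :
    ∃ c₁ : ℝ, 0 < c₁ ∧ ∃ c₂ : ℝ, 0 < c₂ ∧ ∀ n : ℕ, 2 ≤ n →
      c₁ * Real.log n ≤ ratioSup znorm l2 (fun x : (Fin n → ℝ) × (Fin n → ℝ) => x.1) ∧
      ratioSup znorm l2 (fun x : (Fin n → ℝ) × (Fin n → ℝ) => x.1) ≤ c₂ * Real.log n := by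
  refine ⟨1/2, by norm_num, 3, by norm_num, fun n hn => ?_⟩
  have hn0 : (0:ℝ) < n := by positivity
  have hlogn : 0 ≤ Real.log n :=
    Real.log_nonneg (by exact_mod_cast Nat.one_le_of_lt hn)
  have hratio : ∀ x : {x : (Fin n → ℝ) × (Fin n → ℝ) // x ≠ 0},
      l2 ((fun x : (Fin n → ℝ) × (Fin n → ℝ) => x.1) x.1) / znorm x.1 ≤ 3 * Real.log n :=
    fun x => ratio_le hn x.1 x.2
  have hbdd : BddAbove (Set.range fun x : {x : (Fin n → ℝ) × (Fin n → ℝ) // x ≠ 0} =>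
      l2 ((fun x : (Fin n → ℝ) × (Fin n → ℝ) => x.1) x.1) / znorm x.1) := by
    refine ⟨3 * Real.log n, ?_⟩
    rintro _ ⟨x, rfl⟩
    exact hratio x
  constructor
  · -- lower bound
    set a : Fin n → ℝ := fun _ => -(Real.log n / 2) with ha
    set b : Fin n → ℝ := fun _ => (1:ℝ) with hbdef
    have hx0ne : ((a, b) : (Fin n → ℝ) × (Fin n → ℝ)) ≠ 0 := by
      intro h
      have := congrFun (congrArg Prod.snd h) ⟨0, by omega⟩
      simp [hbdef] at this
    have hsqn : l2 b = Real.sqrt n := by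
      simp [l2, hbdef, Finset.card_univ]
    have hsqn_pos : (0:ℝ) < Real.sqrt n := Real.sqrt_pos.mpr hn0
    have hKPF : KPF b = a := by
      funext j
      show (if (1:ℝ) = 0 then (0:ℝ) else 1 * Real.log (|(1:ℝ)| / l2 b)) = -(Real.log n / 2)
      rw [if_neg one_ne_zero, hsqn, abs_one, one_mul, one_div, Real.log_inv,
        Real.log_sqrt hn0.le]
    have hl2a : l2 a = Real.sqrt n * (Real.log n / 2) := by
      have : ∑ j : Fin n, a j ^ 2 = n * (Real.log n / 2) ^ 2 := by
        simp [ha, Finset.card_univ]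
      rw [l2, this, Real.sqrt_mul hn0.le, Real.sqrt_sq (by positivity)]
    have hz : znorm ((a, b) : (Fin n → ℝ) × (Fin n → ℝ)) = Real.sqrt n := by
      unfold znorm
      simp only [hKPF, hsqn]
      have : a - a = (0 : Fin n → ℝ) := by abel
      rw [this]
      simp [l2]
    have hval : l2 a / znorm ((a, b) : (Fin n → ℝ) × (Fin n → ℝ)) = Real.log n / 2 := by
      rw [hz, hl2a, mul_comm, mul_div_assoc, div_self (ne_of_gt hsqn_pos), mul_one]
    calc (1/2 : ℝ) * Real.log n = l2 a / znorm ((a, b) : (Fin n → ℝ) × (Fin n → ℝ)) := by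
          rw [hval]; ring
      _ ≤ _ := le_ciSup hbdd (⟨(a, b), hx0ne⟩ : {x : (Fin n → ℝ) × (Fin n → ℝ) // x ≠ 0})
  · -- upper bound
    have := Real.iSup_le hratio (by positivity)
    calc ratioSup znorm l2 (fun x : (Fin n → ℝ) × (Fin n → ℝ) => x.1) ≤ 3 * Real.log n :=
          this
      _ ≤ 3 * Real.log n := le_rfl
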